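/- arXiv:2412.17962 — 2 statements merged into one kernel-verified Lean document; each statement's English description precedes it below -/
import Mathlib

section
/- If G is a graph in which every pair of non-adjacent vertices has exactly p common neighbors and every pair of adjacent vertices has at most p-2 common neighbors, then G is uniquely B_p-saturated. -/
open SimpleGraph

/-- The diamond graph `C₄⁺`: a `4`-cycle with one chord, i.e. `K₄` minus an edge. -/
def diamond : SimpleGraph (Fin 4) := (⊤ : SimpleGraph (Fin 4)).deleteEdges {s(0, 1)}

/-- `G'` is a copy of `H` in `G`, i.e. a subgraph of `G` isomorphic to `H`. -/
def IsCopy {W V : Type*} (H : SimpleGraph W) {G : SimpleGraph V} (G' : G.Subgraph) : Prop :=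
  Nonempty (G'.coe ≃g H)

/-- `G` is uniquely `H`-saturated: `G` is `H`-free, and adding any non-edge
creates exactly one copy of `H`. -/
def UniquelySaturated {W V : Type*} (H : SimpleGraph W) (G : SimpleGraph V) : Prop :=
  (∀ G' : G.Subgraph, ¬ IsCopy H G') ∧
    ∀ u v : V, u ≠ v → ¬ G.Adj u v →
      ∃! G' : (G ⊔ SimpleGraph.fromEdgeSet {s(u, v)}).Subgraph, IsCopy H G'

/-- The book graph `B_p`: `p` triangles sharing a common edge. The common (rootlet)
edge joins vertices `0` and `1`, and the `p` page vertices are joined to both. -/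
def book (p : ℕ) : SimpleGraph (Fin (p + 2)) :=
  SimpleGraph.fromRel fun u v => u.val < 2 ∨ v.val < 2

lemma book_adj_iff {p : ℕ} {x y : Fin (p+2)} :
    (book p).Adj x y ↔ x ≠ y ∧ (x.val < 2 ∨ y.val < 2) := by
  unfold book; rw [SimpleGraph.fromRel_adj]; tauto

lemma sup_adj_iff {V : Type*} {G : SimpleGraph V} {u v : V} (huv : u ≠ v) (x w : V) :
    (G ⊔ SimpleGraph.fromEdgeSet {s(u,v)}).Adj x w ↔
      G.Adj x w ∨ (x = u ∧ w = v) ∨ (x = v ∧ w = u) := by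
  rw [SimpleGraph.sup_adj, SimpleGraph.fromEdgeSet_adj]
  simp only [Set.mem_singleton_iff, Sym2.eq, Sym2.rel_iff', Prod.mk.injEq, Prod.swap_prod_mk]
  constructor
  · rintro (h | ⟨(⟨rfl, rfl⟩ | ⟨rfl, rfl⟩), h2⟩) <;> tauto
  · rintro (h | ⟨rfl, rfl⟩ | ⟨rfl, rfl⟩) <;> tauto

lemma pages_le {V : Type*} [Fintype V] {H : SimpleGraph V} {p : ℕ} (G'' : H.Subgraph)
    (f : G''.coe ≃g book p) :
    p ≤ (H.neighborSet ↑(f.symm ⟨0, by omega⟩) ∩ H.neighborSet ↑(f.symm ⟨1, by omega⟩)).ncard := by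
  set z : Fin (p+2) := ⟨0, by omega⟩
  set o : Fin (p+2) := ⟨1, by omega⟩
  set g : Fin p → V := fun i => ↑(f.symm ⟨i.val + 2, by omega⟩) with hg
  have hadj : ∀ x y : Fin (p+2), (book p).Adj x y → H.Adj ↑(f.symm x) ↑(f.symm y) := by
    intro x y h
    have h2 : G''.coe.Adj (f.symm x) (f.symm y) := f.symm.map_rel_iff.mpr h
    exact G''.adj_sub h2
  have hmem : ∀ i : Fin p, g i ∈ H.neighborSet ↑(f.symm z) ∩ H.neighborSet ↑(f.symm o) := by
    intro i
    constructor
    · exact hadj z ⟨i.val + 2, by omega⟩ (book_adj_iff.mpr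
        ⟨by simp [z, Fin.ext_iff], Or.inl (by simp [z])⟩)
    · exact hadj o ⟨i.val + 2, by omega⟩ (book_adj_iff.mpr
        ⟨by simp [o, Fin.ext_iff, Nat.succ_ne_zero], Or.inl (by simp [o])⟩)
  have hinj : Function.Injective g := by
    intro i j h
    have h2 := f.symm.injective (Subtype.val_injective h)
    have : i.val + 2 = j.val + 2 := congrArg Fin.val h2
    exact Fin.ext (by omega)
  calc p = (Set.univ : Set (Fin p)).ncard := by
          rw [Set.ncard_univ, Nat.card_eq_fintype_card, Fintype.card_fin]
    _ = (g '' Set.univ).ncard := (Set.ncard_image_of_injective _ hinj).symm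
    _ ≤ _ := Set.ncard_le_ncard (by rintro w ⟨i, -, rfl⟩; exact hmem i) (Set.toFinite _)

lemma extra_nbr {V : Type*} {G : SimpleGraph V} {u v a b : V} (huv : u ≠ v)
    (hnadj : ¬ G.Adj u v) (hab : G.Adj a b) :
    ∃ c : V, ((G ⊔ SimpleGraph.fromEdgeSet {s(u,v)}).neighborSet a ∩
        (G ⊔ SimpleGraph.fromEdgeSet {s(u,v)}).neighborSet b) ⊆
      (G.neighborSet a ∩ G.neighborSet b) ∪ {c} := by
  classical
  refine ⟨if a = u then v else if a = v then u else if b = u then v else u, ?_⟩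
  rintro w ⟨hwa, hwb⟩
  rw [SimpleGraph.mem_neighborSet, sup_adj_iff huv] at hwa hwb
  rcases hwa with hwa | ⟨hau, hwv⟩ | ⟨hav, hwu⟩
  · rcases hwb with hwb | ⟨hbu, hwv⟩ | ⟨hbv, hwu⟩
    · exact Or.inl ⟨hwa, hwb⟩
    · right
      have hau : a ≠ u := fun h => (G.ne_of_adj hab) (h.trans hbu.symm)
      have hav : a ≠ v := fun h => hnadj (h ▸ hbu ▸ hab.symm)
      simp [hau, hav, hbu, hwv]
    · right
      have hav : a ≠ v := fun h => (G.ne_of_adj hab) (h.trans hbv.symm)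
      have hau : a ≠ u := fun h => hnadj (h ▸ hbv ▸ hab)
      have hbu : b ≠ u := fun h => huv (h.symm.trans hbv)
      simp [hau, hav, hbu, hwu]
  · right; simp [hau, hwv]
  · right
    have hau : a ≠ u := fun h => huv (h.symm.trans hav)
    simp [hau, hav, hwu, huv.symm]

theorem stmt18 {V : Type*} [Fintype V] (G : SimpleGraph V) (p : ℕ)
    (hnonadj : ∀ u v : V, u ≠ v → ¬ G.Adj u v →
      (G.neighborSet u ∩ G.neighborSet v).ncard = p)
    (hadj : ∀ u v : V, G.Adj u v →
      (G.neighborSet u ∩ G.neighborSet v).ncard + 2 ≤ p) :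
    UniquelySaturated (book p) G := by
  constructor
  · rintro G' ⟨f⟩
    have hab : G.Adj ↑(f.symm ⟨0, by omega⟩) ↑(f.symm ⟨1, by omega⟩) := by
      have h2 : G'.coe.Adj (f.symm ⟨0, by omega⟩) (f.symm ⟨1, by omega⟩) :=
        f.symm.map_rel_iff.mpr (book_adj_iff.mpr ⟨by simp [Fin.ext_iff], Or.inl (by simp)⟩)
      exact G'.adj_sub h2
    have h1 := pages_le G' f
    have h2 := hadj _ _ hab
    omega
  · intro u v hne hnadj
    classical
    set H := G ⊔ SimpleGraph.fromEdgeSet {s(u, v)} with hH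
    set S := G.neighborSet u ∩ G.neighborSet v with hS
    have hScard : S.ncard = p := hnonadj u v hne hnadj
    have hmemS : ∀ w, w ∈ S ↔ G.Adj u w ∧ G.Adj v w := by
      intro w; simp [hS, SimpleGraph.mem_neighborSet]
    have huS : u ∉ S := fun h => G.irrefl ((hmemS u).mp h).1
    have hvS : v ∉ S := fun h => G.irrefl ((hmemS v).mp h).2
    have hSfin : S.Finite := Set.toFinite _
    haveI : Fintype ↥S := hSfin.fintype
    have hcard : Fintype.card ↥S = p := by
      rw [← hScard, Set.ncard_eq_toFinset_card' S, Set.toFinset_card]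
    set σ : ↥S ≃ Fin p := Fintype.equivFinOfCardEq hcard with hσ
    set m : Fin (p+2) → V := fun x =>
      if h : x.val < 2 then (if x.val = 0 then u else v)
      else ↑(σ.symm ⟨x.val - 2, by omega⟩) with hm
    have hmu : ∀ x : Fin (p+2), x.val = 0 → m x = u := by
      intro x h; simp only [hm]; rw [dif_pos (by omega), if_pos h]
    have hmv : ∀ x : Fin (p+2), x.val = 1 → m x = v := by
      intro x h; simp only [hm]; rw [dif_pos (by omega), if_neg (by omega)]
    have hmS : ∀ x : Fin (p+2), 2 ≤ x.val → m x ∈ S := by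
      intro x h; simp only [hm]; rw [dif_neg (by omega)]; exact (σ.symm _).2
    have hmemuv : ∀ x : Fin (p+2), (m x = u ∨ m x = v) ↔ x.val < 2 := by
      intro x
      constructor
      · intro h
        by_contra hc
        push_neg at hc
        have hxS := hmS x hc
        rcases h with h | h
        · exact huS (h ▸ hxS)
        · exact hvS (h ▸ hxS)
      · intro h
        by_cases h0 : x.val = 0
        · exact Or.inl (hmu x h0)
        · exact Or.inr (hmv x (by omega))
    have hminj : Function.Injective m := by
      intro x y h
      by_cases hx : x.val < 2 <;> by_cases hy : y.val < 2
      · by_cases hx0 : x.val = 0 <;> by_cases hy0 : y.val = 0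
        · exact Fin.ext (by omega)
        · rw [hmu x hx0, hmv y (by omega)] at h; exact absurd h hne
        · rw [hmv x (by omega), hmu y hy0] at h; exact absurd h.symm hne
        · exact Fin.ext (by omega)
      · exfalso
        have hyS := hmS y (by omega)
        rcases (hmemuv x).mpr hx with h2 | h2
        · exact huS ((h2 ▸ h) ▸ hyS)
        · exact hvS ((h2 ▸ h) ▸ hyS)
      · exfalso
        have hxS := hmS x (by omega)
        rcases (hmemuv y).mpr hy with h2 | h2
        · exact huS ((h2 ▸ h.symm) ▸ hxS)
        · exact hvS ((h2 ▸ h.symm) ▸ hxS)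
      · simp only [hm] at h
        rw [dif_neg (by omega), dif_neg (by omega)] at h
        have h2 := σ.symm.injective (Subtype.val_injective h)
        have h3 : x.val - 2 = y.val - 2 := congrArg Fin.val h2
        exact Fin.ext (by omega)
    have hrange : Set.range m = {u, v} ∪ S := by
      ext w
      constructor
      · rintro ⟨x, rfl⟩
        by_cases hx : x.val < 2
        · rcases (hmemuv x).mpr hx with h | h <;> rw [h] <;> simp
        · exact Or.inr (hmS x (by omega))
      · intro hw
        rcases hw with hw | hw
        · rcases hw with rfl | rfl
          · exact ⟨⟨0, by omega⟩, hmu _ rfl⟩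
          · exact ⟨⟨1, by omega⟩, hmv _ rfl⟩
        · refine ⟨⟨(σ ⟨w, hw⟩).val + 2, by omega⟩, ?_⟩
          simp only [hm]
          rw [dif_neg (by omega)]
          have h2 : (⟨(σ ⟨w, hw⟩).val + 2 - 2, by omega⟩ : Fin p) = σ ⟨w, hw⟩ :=
            Fin.ext (by simp)
          rw [h2, Equiv.symm_apply_apply]
    have hmem' : ∀ w, w ∈ ({u, v} ∪ S : Set V) ↔ w = u ∨ w = v ∨ w ∈ S := by
      intro w; simp [Set.mem_union, Set.mem_insert_iff]; tauto
    set B : H.Subgraph :=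
      { verts := {u, v} ∪ S
        Adj := fun a b => a ≠ b ∧ a ∈ ({u, v} ∪ S : Set V) ∧ b ∈ ({u, v} ∪ S : Set V) ∧
          (a = u ∨ a = v ∨ b = u ∨ b = v)
        adj_sub := by
          rintro a b ⟨h1, h2, h3, h4⟩
          rw [hH, sup_adj_iff hne]
          rw [hmem'] at h2 h3
          rcases h4 with h4 | h4 | h4 | h4
          · subst h4
            rcases h3 with h3 | h3 | h3
            · exact absurd h3.symm h1
            · exact Or.inr (Or.inl ⟨rfl, h3⟩)
            · exact Or.inl ((hmemS b).mp h3).1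
          · subst h4
            rcases h3 with h3 | h3 | h3
            · exact Or.inr (Or.inr ⟨rfl, h3⟩)
            · exact absurd h3.symm h1
            · exact Or.inl ((hmemS b).mp h3).2
          · subst h4
            rcases h2 with h2 | h2 | h2
            · exact absurd h2 h1
            · exact Or.inr (Or.inr ⟨h2, rfl⟩)
            · exact Or.inl (G.adj_symm ((hmemS a).mp h2).1)
          · subst h4
            rcases h2 with h2 | h2 | h2
            · exact Or.inr (Or.inl ⟨h2, rfl⟩)
            · exact absurd h2 h1
            · exact Or.inl (G.adj_symm ((hmemS a).mp h2).2)
        edge_vert := fun h => h.2.1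
        symm := by
          constructor
          rintro a b ⟨h1, h2, h3, h4⟩
          exact ⟨h1.symm, h3, h2, by tauto⟩ } with hB
    have hBadj : ∀ x y : Fin (p+2), B.Adj (m x) (m y) ↔ (book p).Adj x y := by
      intro x y
      rw [book_adj_iff]
      constructor
      · rintro ⟨h1, -, -, h4⟩
        refine ⟨fun e => h1 (by rw [e]), ?_⟩
        rcases h4 with h4 | h4 | h4 | h4
        · exact Or.inl ((hmemuv x).mp (Or.inl h4))
        · exact Or.inl ((hmemuv x).mp (Or.inr h4))
        · exact Or.inr ((hmemuv y).mp (Or.inl h4))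
        · exact Or.inr ((hmemuv y).mp (Or.inr h4))
      · rintro ⟨h1, h2⟩
        refine ⟨fun e => h1 (hminj e), ?_, ?_, ?_⟩
        · rw [← hrange]; exact ⟨x, rfl⟩
        · rw [← hrange]; exact ⟨y, rfl⟩
        · rcases h2 with h2 | h2
          · rcases (hmemuv x).mpr h2 with h | h
            · exact Or.inl h
            · exact Or.inr (Or.inl h)
          · rcases (hmemuv y).mpr h2 with h | h
            · exact Or.inr (Or.inr (Or.inl h))
            · exact Or.inr (Or.inr (Or.inr h))
    have hvertsB : B.verts = {u, v} ∪ S := rfl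
    set e0 : Fin (p+2) ≃ ↥B.verts :=
      (Equiv.ofInjective m hminj).trans (Equiv.setCongr (by rw [hrange, hvertsB])) with he0
    have he0val : ∀ x : Fin (p+2), (↑(e0 x) : V) = m x := fun x => rfl
    have iso0 : book p ≃g B.coe :=
      { toEquiv := e0
        map_rel_iff' := by
          intro x y
          rw [SimpleGraph.Subgraph.coe_adj, he0val, he0val]
          exact hBadj x y }
    refine ⟨B, ⟨iso0.symm⟩, ?_⟩
    rintro G'' ⟨f⟩
    have hBAdj' : ∀ a b, B.Adj a b ↔ (a ≠ b ∧ a ∈ ({u, v} ∪ S : Set V) ∧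
        b ∈ ({u, v} ∪ S : Set V) ∧ (a = u ∨ a = v ∨ b = u ∨ b = v)) := fun a b => Iff.rfl
    set g : Fin (p+2) → V := fun x => ↑(f.symm x) with hg
    have hgadj2 : ∀ x y : Fin (p+2), G''.Adj (g x) (g y) ↔ (book p).Adj x y := by
      intro x y
      exact f.symm.map_rel_iff
    have ginj : Function.Injective g := fun x y h => f.symm.injective (Subtype.val_injective h)
    set z : Fin (p+2) := ⟨0, by omega⟩ with hz
    set o : Fin (p+2) := ⟨1, by omega⟩ with ho
    have hzo : G''.Adj (g z) (g o) := (hgadj2 _ _).mpr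
      (book_adj_iff.mpr ⟨by simp [hz, ho, Fin.ext_iff], Or.inl (by simp [hz])⟩)
    have hHzo : H.Adj (g z) (g o) := G''.adj_sub hzo
    have hGzo : ¬ G.Adj (g z) (g o) := by
      intro hG
      obtain ⟨c, hsub⟩ := extra_nbr hne hnadj hG
      have h1 : p ≤ (H.neighborSet (g z) ∩ H.neighborSet (g o)).ncard := pages_le G'' f
      have h2 : (H.neighborSet (g z) ∩ H.neighborSet (g o)).ncard ≤
          (G.neighborSet (g z) ∩ G.neighborSet (g o)).ncard + 1 := by
        calc (H.neighborSet (g z) ∩ H.neighborSet (g o)).ncard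
            ≤ ((G.neighborSet (g z) ∩ G.neighborSet (g o)) ∪ {c}).ncard :=
              Set.ncard_le_ncard hsub (Set.toFinite _)
          _ ≤ (G.neighborSet (g z) ∩ G.neighborSet (g o)).ncard + ({c} : Set V).ncard :=
              Set.ncard_union_le _ _
          _ = _ + 1 := by rw [Set.ncard_singleton]
      have h3 := hadj _ _ hG
      omega
    have horder : (g z = u ∧ g o = v) ∨ (g z = v ∧ g o = u) := by
      have h2 := hHzo
      rw [hH, sup_adj_iff hne] at h2
      tauto
    have hHuv : ∀ w, w ∈ H.neighborSet u ∩ H.neighborSet v ↔ w ∈ S := by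
      intro w
      rw [Set.mem_inter_iff, SimpleGraph.mem_neighborSet, SimpleGraph.mem_neighborSet,
        hH, sup_adj_iff hne, sup_adj_iff hne]
      constructor
      · rintro ⟨hu2, hv2⟩
        rcases hu2 with hu2 | ⟨-, rfl⟩ | ⟨h2, -⟩
        · rcases hv2 with hv2 | ⟨h3, -⟩ | ⟨-, rfl⟩
          · exact (hmemS w).mpr ⟨hu2, hv2⟩
          · exact absurd h3 hne.symm
          · exact absurd hu2 (fun h => G.irrefl h)
        · rcases hv2 with hv2 | ⟨h3, -⟩ | ⟨-, h4⟩
          · exact absurd hv2 (fun h => G.irrefl h)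
          · exact absurd h3 hne.symm
          · exact absurd h4.symm hne
        · exact absurd h2 hne
      · intro hw
        exact ⟨Or.inl ((hmemS w).mp hw).1, Or.inl ((hmemS w).mp hw).2⟩
    have hgS : ∀ x : Fin (p+2), 2 ≤ x.val → g x ∈ S := by
      intro x hx
      have h1 : G''.Adj (g z) (g x) := (hgadj2 _ _).mpr
        (book_adj_iff.mpr ⟨by simp [hz, Fin.ext_iff]; omega, Or.inl (by simp [hz])⟩)
      have h2 : G''.Adj (g o) (g x) := (hgadj2 _ _).mpr
        (book_adj_iff.mpr ⟨by simp [ho, Fin.ext_iff]; omega, Or.inl (by simp [ho])⟩)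
      rcases horder with ⟨hu1, hv1⟩ | ⟨hv1, hu1⟩
      · exact (hHuv _).mp ⟨hu1 ▸ G''.adj_sub h1, hv1 ▸ G''.adj_sub h2⟩
      · exact (hHuv _).mp ⟨hu1 ▸ G''.adj_sub h2, hv1 ▸ G''.adj_sub h1⟩
    have hguv : ∀ x : Fin (p+2), (g x = u ∨ g x = v) ↔ x.val < 2 := by
      intro x
      constructor
      · intro h
        by_contra hc
        push_neg at hc
        have hxS := hgS x hc
        rcases h with h | h
        · exact huS (h ▸ hxS)
        · exact hvS (h ▸ hxS)
      · intro h
        by_cases h0 : x.val = 0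
        · have hxz : x = z := Fin.ext (by simp [hz, h0])
          rw [hxz]
          rcases horder with ⟨h1, -⟩ | ⟨h1, -⟩
          · exact Or.inl h1
          · exact Or.inr h1
        · have hxo : x = o := Fin.ext (by simp [ho]; omega)
          rw [hxo]
          rcases horder with ⟨-, h1⟩ | ⟨-, h1⟩
          · exact Or.inr h1
          · exact Or.inl h1
    set pg : Fin p → V := fun i => g ⟨i.val + 2, by omega⟩ with hpg
    have hpgS : Set.range pg ⊆ S := by
      rintro w ⟨i, rfl⟩
      exact hgS _ (by simp [hpg])
    have hpginj : Function.Injective pg := by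
      intro i j h
      have h2 : i.val + 2 = j.val + 2 := by simpa [Fin.ext_iff] using ginj h
      exact Fin.ext (by omega)
    have hpgeq : Set.range pg = S := by
      refine Set.eq_of_subset_of_ncard_le hpgS ?_ (Set.toFinite _)
      rw [hScard, ← Set.image_univ, Set.ncard_image_of_injective _ hpginj, Set.ncard_univ,
        Nat.card_eq_fintype_card, Fintype.card_fin]
    have hrange' : Set.range g = {u, v} ∪ S := by
      ext w
      rw [hmem']
      constructor
      · rintro ⟨x, rfl⟩
        by_cases hx : x.val < 2
        · rcases (hguv x).mpr hx with h | h
          · exact Or.inl h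
          · exact Or.inr (Or.inl h)
        · exact Or.inr (Or.inr (hgS x (by omega)))
      · rintro (rfl | rfl | hw)
        · rcases horder with ⟨h1, -⟩ | ⟨-, h1⟩
          · exact ⟨z, h1⟩
          · exact ⟨o, h1⟩
        · rcases horder with ⟨-, h1⟩ | ⟨h1, -⟩
          · exact ⟨o, h1⟩
          · exact ⟨z, h1⟩
        · rw [← hpgeq] at hw
          obtain ⟨i, rfl⟩ := hw
          exact ⟨_, rfl⟩
    have hverts'' : G''.verts = {u, v} ∪ S := by
      rw [← hrange']
      ext w
      constructor
      · intro hw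
        exact ⟨f ⟨w, hw⟩, by simp [hg]⟩
      · rintro ⟨x, rfl⟩
        exact (f.symm x).2
    have hAdjiff : ∀ a b, G''.Adj a b ↔ B.Adj a b := by
      intro a b
      constructor
      · intro h
        have ha : a ∈ G''.verts := G''.edge_vert h
        have hb : b ∈ G''.verts := G''.edge_vert h.symm
        rw [hverts'', ← hrange'] at ha hb
        obtain ⟨x, rfl⟩ := ha
        obtain ⟨y, rfl⟩ := hb
        have h2 := (hgadj2 x y).mp h
        rw [book_adj_iff] at h2
        refine (hBAdj' _ _).mpr ⟨fun e => h2.1 (ginj e), ?_, ?_, ?_⟩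
        · rw [← hrange']; exact ⟨x, rfl⟩
        · rw [← hrange']; exact ⟨y, rfl⟩
        · rcases h2.2 with h3 | h3
          · rcases (hguv x).mpr h3 with h4 | h4
            · exact Or.inl h4
            · exact Or.inr (Or.inl h4)
          · rcases (hguv y).mpr h3 with h4 | h4
            · exact Or.inr (Or.inr (Or.inl h4))
            · exact Or.inr (Or.inr (Or.inr h4))
      · intro h
        obtain ⟨h1, h2, h3, h4⟩ := (hBAdj' _ _).mp h
        rw [← hrange'] at h2 h3
        obtain ⟨x, rfl⟩ := h2
        obtain ⟨y, rfl⟩ := h3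
        refine (hgadj2 x y).mpr (book_adj_iff.mpr ⟨fun e => h1 (by rw [e]), ?_⟩)
        rcases h4 with h4 | h4 | h4 | h4
        · exact Or.inl ((hguv x).mp (Or.inl h4))
        · exact Or.inl ((hguv x).mp (Or.inr h4))
        · exact Or.inr ((hguv y).mp (Or.inl h4))
        · exact Or.inr ((hguv y).mp (Or.inr h4))
    apply SimpleGraph.Subgraph.ext
    · rw [hverts'', hvertsB]
    · funext a b
      exact propext (hAdjiff a b)
end

section
/- For r >= 2 and k >= 1, the balanced complete r-partite graph K_{k,...,k} (with all r parts of size k) is uniquely B_{(r-1)k}-saturated and contains no copy of B_{(r-2)k+1}. -/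
open SimpleGraph

lemma book_adj {p : ℕ} (x y : Fin (p+2)) :
    (book p).Adj x y ↔ x ≠ y ∧ (x.val < 2 ∨ y.val < 2) := by
  rw [book, SimpleGraph.fromRel_adj]; tauto

lemma card_ne_two {α : Type*} [Fintype α] [DecidableEq α] (a b : α) (h : a ≠ b) :
    Fintype.card {w : α // w ≠ a ∧ w ≠ b} = Fintype.card α - 2 := by
  have h1 : Fintype.card {w : α // w ≠ a ∧ w ≠ b}
      = Fintype.card {w : α // ¬ (w = a ∨ w = b)} :=
    Fintype.card_congr (Equiv.subtypeEquivRight (fun x => by tauto))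
  rw [h1, Fintype.card_subtype_compl]
  congr 1
  rw [Fintype.card_subtype]
  have : (Finset.univ.filter fun w : α => w = a ∨ w = b) = {a, b} := by
    ext w; simp
  rw [this, Finset.card_insert_of_notMem (by simp [h]), Finset.card_singleton]

lemma card_ne_one {α : Type*} [Fintype α] [DecidableEq α] (a : α) :
    Fintype.card {w : α // w ≠ a} = Fintype.card α - 1 := by
  have h1 : Fintype.card {w : α // w ≠ a} = Fintype.card {w : α // ¬ (w = a)} := rfl
  rw [h1, Fintype.card_subtype_compl, Fintype.card_subtype_eq]

def sigmaSub {r k : ℕ} (P : Fin r → Prop) [DecidablePred P] :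
    {x : (i : Fin r) × Fin k // P x.1} ≃ ({i : Fin r // P i} × Fin k) where
  toFun x := (⟨x.val.1, x.prop⟩, x.val.2)
  invFun y := ⟨⟨y.1.val, y.2⟩, y.1.prop⟩
  left_inv := fun ⟨⟨i,j⟩,h⟩ => rfl
  right_inv := fun ⟨⟨i,h⟩,j⟩ => rfl

lemma card_ne {r k : ℕ} (i₀ : Fin r) :
    Nat.card {x : (i : Fin r) × Fin k // x.1 ≠ i₀} = (r-1)*k :=
  (Nat.card_congr (sigmaSub (fun i => i ≠ i₀))).trans (by
    rw [Nat.card_eq_fintype_card, Fintype.card_prod, card_ne_one,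
      Fintype.card_fin, Fintype.card_fin])

lemma card_ne₂ {r k : ℕ} (i₀ i₁ : Fin r) (h : i₀ ≠ i₁) :
    Nat.card {x : (i : Fin r) × Fin k // x.1 ≠ i₀ ∧ x.1 ≠ i₁} = (r-2)*k :=
  (Nat.card_congr (sigmaSub (fun i => i ≠ i₀ ∧ i ≠ i₁))).trans (by
    rw [Nat.card_eq_fintype_card, Fintype.card_prod, card_ne_two _ _ h,
      Fintype.card_fin, Fintype.card_fin])

set_option maxHeartbeats 1000000 in
lemma iso_book_of {W : Type*} [Finite W] (X : SimpleGraph W) (p : ℕ) (a b : W) (hab : a ≠ b)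
    (hcard : Nat.card W = p + 2)
    (hAdj : ∀ x y, X.Adj x y ↔ x ≠ y ∧ (x = a ∨ x = b ∨ y = a ∨ y = b)) :
    Nonempty (X ≃g book p) := by
  classical
  have : Fintype W := Fintype.ofFinite W
  have hcard' : Fintype.card W = p + 2 := by rw [← Nat.card_eq_fintype_card]; exact hcard
  have hsub : Fintype.card {w : W // w ≠ a ∧ w ≠ b} = p := by
    rw [card_ne_two a b hab, hcard']; omega
  let e₀ : {w : W // w ≠ a ∧ w ≠ b} ≃ Fin p := Fintype.equivFinOfCardEq hsub
  let f : W → Fin (p+2) := fun w =>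
    if h1 : w = a then ⟨0, by omega⟩
    else if h2 : w = b then ⟨1, by omega⟩
    else ⟨(e₀ ⟨w, h1, h2⟩).val + 2, by have := (e₀ ⟨w, h1, h2⟩).isLt; omega⟩
  have hva : (f a).val = 0 := by simp [f]
  have hvb : (f b).val = 1 := by simp [f, hab.symm]
  have hvo : ∀ w (h1 : w ≠ a) (h2 : w ≠ b), (f w).val = (e₀ ⟨w, h1, h2⟩).val + 2 := by
    intro w h1 h2; simp [f, h1, h2]
  have hval : ∀ w, (f w).val < 2 ↔ (w = a ∨ w = b) := by
    intro w
    by_cases h1 : w = a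
    · subst h1; rw [hva]; simp
    · by_cases h2 : w = b
      · subst h2; rw [hvb]; simp
      · rw [hvo w h1 h2]; simp [h1, h2]
  have finj : Function.Injective f := by
    intro x y hxy
    replace hxy : (f x).val = (f y).val := congrArg Fin.val hxy
    by_cases h1 : x = a
    · by_cases h2 : y = a
      · exact h1.trans h2.symm
      · by_cases h4 : y = b
        · rw [h1, h4, hva, hvb] at hxy; omega
        · rw [h1, hva, hvo y h2 h4] at hxy; omega
    · by_cases h3 : x = b
      · by_cases h2 : y = a
        · rw [h3, h2, hvb, hva] at hxy; omega
        · by_cases h4 : y = b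
          · exact h3.trans h4.symm
          · rw [h3, hvb, hvo y h2 h4] at hxy; omega
      · by_cases h2 : y = a
        · rw [h2, hva, hvo x h1 h3] at hxy; omega
        · by_cases h4 : y = b
          · rw [h4, hvb, hvo x h1 h3] at hxy; omega
          · rw [hvo x h1 h3, hvo y h2 h4] at hxy
            have he : (⟨x, h1, h3⟩ : {w : W // w ≠ a ∧ w ≠ b}) = ⟨y, h2, h4⟩ :=
              e₀.injective (Fin.ext (by omega))
            exact congrArg Subtype.val he
  have fsurj : Function.Surjective f := by
    intro x
    rcases Nat.lt_or_ge x.val 2 with h | h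
    · rcases Nat.lt_or_ge x.val 1 with h0 | h0
      · exact ⟨a, Fin.ext (by rw [hva]; omega)⟩
      · exact ⟨b, Fin.ext (by rw [hvb]; omega)⟩
    · have hx2 : x.val - 2 < p := by have := x.isLt; omega
      set s := e₀.symm ⟨x.val - 2, hx2⟩ with hs
      refine ⟨s.val, Fin.ext ?_⟩
      rw [hvo s.val s.prop.1 s.prop.2]
      have : (⟨s.val, s.prop.1, s.prop.2⟩ : {w : W // w ≠ a ∧ w ≠ b}) = s := Subtype.ext rfl
      rw [this, hs, Equiv.apply_symm_apply]
      simp; omega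
  refine ⟨⟨Equiv.ofBijective f ⟨finj, fsurj⟩, ?_⟩⟩
  intro x y
  show (book p).Adj (f x) (f y) ↔ X.Adj x y
  rw [book_adj, hAdj]
  constructor
  · rintro ⟨hne, hlt⟩
    refine ⟨fun h => hne (by rw [h]), ?_⟩
    rcases hlt with h | h
    · rcases (hval x).mp h with h | h
      · exact Or.inl h
      · exact Or.inr (Or.inl h)
    · rcases (hval y).mp h with h | h
      · exact Or.inr (Or.inr (Or.inl h))
      · exact Or.inr (Or.inr (Or.inr h))
  · rintro ⟨hne, hc⟩
    refine ⟨fun h => hne (finj h), ?_⟩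
    rcases hc with h | h | h | h
    · exact Or.inl ((hval x).mpr (Or.inl h))
    · exact Or.inl ((hval x).mpr (Or.inr h))
    · exact Or.inr ((hval y).mpr (Or.inl h))
    · exact Or.inr ((hval y).mpr (Or.inr h))

lemma free {r k : ℕ} (p : ℕ) (hp : (r-2)*k + 1 ≤ p)
    (G' : (completeMultipartiteGraph fun _ : Fin r => Fin k).Subgraph) :
    ¬ IsCopy (book p) G' := by
  rintro ⟨e⟩
  have h01 : (book p).Adj 0 1 := by
    rw [book_adj]
    refine ⟨?_, Or.inl ?_⟩
    · intro h
      have := congrArg Fin.val h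
      simp [Fin.val_zero, Fin.val_one] at this
    · simp [Fin.val_zero]
  have hab : G'.Adj (e.symm 0).val (e.symm 1).val := by
    have := e.symm.map_rel_iff.mpr h01
    exact (SimpleGraph.Subgraph.coe_adj _ _ _).mp this
  set a : (i : Fin r) × Fin k := (e.symm 0).val
  set b : (i : Fin r) × Fin k := (e.symm 1).val
  have hab1 : a.1 ≠ b.1 := by
    have := G'.adj_sub hab
    simpa using this
  -- pages inject into common neighbourhood
  have hpage : ∀ j : Fin p, ∃ h : ((e.symm ⟨j.val + 2, by omega⟩).val ∈ G'.verts),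
      True := fun j => ⟨(e.symm ⟨j.val + 2, by omega⟩).prop, trivial⟩
  let g : Fin p → {x : (i : Fin r) × Fin k // x.1 ≠ a.1 ∧ x.1 ≠ b.1} := fun j => by
    refine ⟨(e.symm ⟨j.val + 2, by omega⟩).val, ?_, ?_⟩
    · have hadj : (book p).Adj ⟨j.val + 2, by omega⟩ 0 := by
        rw [book_adj]
        constructor
        · intro h; have := congrArg Fin.val h; simp at this
        · right; simp [Fin.val_zero]
      have := (SimpleGraph.Subgraph.coe_adj _ _ _).mp (e.symm.map_rel_iff.mpr hadj)
      have := G'.adj_sub this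
      simpa using this
    · have hadj : (book p).Adj ⟨j.val + 2, by omega⟩ 1 := by
        rw [book_adj]
        constructor
        · intro h; have := congrArg Fin.val h; simp [Fin.val_one] at this
        · right; simp [Fin.val_one]
      have := (SimpleGraph.Subgraph.coe_adj _ _ _).mp (e.symm.map_rel_iff.mpr hadj)
      have := G'.adj_sub this
      simpa using this
  have ginj : Function.Injective g := by
    intro i j hij
    have h' := congrArg Subtype.val hij
    have h2 : (e.symm ⟨i.val + 2, by omega⟩ : G'.verts) = e.symm ⟨j.val + 2, by omega⟩ := by
      exact Subtype.ext h'
    have := e.symm.injective h2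
    have := congrArg Fin.val this
    simp at this
    exact Fin.ext this
  have hle : p ≤ (r-2)*k := by
    have h1 := Nat.card_le_card_of_injective g ginj
    rwa [Nat.card_eq_fintype_card, Fintype.card_fin, card_ne₂ a.1 b.1 hab1] at h1
  exact Nat.not_succ_le_self _ (hp.trans hle)

lemma book_adj' {p : ℕ} (x y : Fin (p+2)) (h : x.val ≠ y.val)
    (h2 : x.val < 2 ∨ y.val < 2) : (book p).Adj x y :=
  (book_adj x y).mpr ⟨fun hh => h (congrArg Fin.val hh), h2⟩

abbrev Vt (r k : ℕ) := (i : Fin r) × Fin k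

abbrev Gm (r k : ℕ) : SimpleGraph (Vt r k) := completeMultipartiteGraph fun _ : Fin r => Fin k

abbrev GE {r k : ℕ} (u v : Vt r k) : SimpleGraph (Vt r k) :=
  Gm r k ⊔ SimpleGraph.fromEdgeSet {s(u, v)}

lemma geAdj {r k : ℕ} {u v : Vt r k} (hne : u ≠ v) (x y : Vt r k) :
    (GE u v).Adj x y ↔ x.1 ≠ y.1 ∨ (x = u ∧ y = v) ∨ (x = v ∧ y = u) := by
  simp only [GE, Gm, SimpleGraph.sup_adj, SimpleGraph.fromEdgeSet_adj, Set.mem_singleton_iff,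
    Sym2.eq_iff, SimpleGraph.comap_adj, SimpleGraph.top_adj]
  constructor
  · rintro (h | ⟨h, -⟩)
    · exact Or.inl h
    · exact Or.inr h
  · rintro (h | h)
    · exact Or.inl h
    · refine Or.inr ⟨h, ?_⟩
      rcases h with ⟨rfl, rfl⟩ | ⟨rfl, rfl⟩
      · exact hne
      · exact hne.symm

def H0 {r k : ℕ} (u v : Vt r k) (h1 : u.1 = v.1) (hne : u ≠ v) : (GE u v).Subgraph where
  verts := {u, v} ∪ {x | x.1 ≠ u.1}
  Adj x y := x ≠ y ∧ (x ∈ ({u, v} ∪ {x | x.1 ≠ u.1} : Set (Vt r k)))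
    ∧ (y ∈ ({u, v} ∪ {x | x.1 ≠ u.1} : Set (Vt r k))) ∧ (x = u ∨ x = v ∨ y = u ∨ y = v)
  adj_sub := by
    rintro x y ⟨hxy, hx, hy, hc⟩
    rw [geAdj hne]
    simp only [Set.mem_union, Set.mem_insert_iff, Set.mem_singleton_iff, Set.mem_setOf_eq]
      at hx hy
    rcases hc with rfl | rfl | rfl | rfl
    · rcases hy with (rfl | rfl) | hy
      · exact absurd rfl hxy
      · exact Or.inr (Or.inl ⟨rfl, rfl⟩)
      · exact Or.inl (Ne.symm hy)
    · rcases hy with (rfl | rfl) | hy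
      · exact Or.inr (Or.inr ⟨rfl, rfl⟩)
      · exact absurd rfl hxy
      · exact Or.inl (fun hh => hy (hh ▸ h1.symm))
    · rcases hx with (rfl | rfl) | hx
      · exact absurd rfl hxy
      · exact Or.inr (Or.inr ⟨rfl, rfl⟩)
      · exact Or.inl hx
    · rcases hx with (rfl | rfl) | hx
      · exact Or.inr (Or.inl ⟨rfl, rfl⟩)
      · exact absurd rfl hxy
      · exact Or.inl (fun hh => hx (hh.trans h1.symm))
  edge_vert := fun h => h.2.1
  symm := by
    constructor
    rintro x y ⟨hxy, hx, hy, hc⟩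
    exact ⟨hxy.symm, hy, hx, by tauto⟩

lemma H0_mem_u {r k : ℕ} (u v : Vt r k) (h1 : u.1 = v.1) (hne : u ≠ v) :
    u ∈ (H0 u v h1 hne).verts := Or.inl (Or.inl rfl)

lemma H0_mem_v {r k : ℕ} (u v : Vt r k) (h1 : u.1 = v.1) (hne : u ≠ v) :
    v ∈ (H0 u v h1 hne).verts := Or.inl (Or.inr rfl)

lemma H0_copy {r k : ℕ} (u v : Vt r k) (h1 : u.1 = v.1) (hne : u ≠ v) :
    Nonempty ((H0 u v h1 hne).coe ≃g book ((r-1)*k)) := by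
  apply iso_book_of _ ((r-1)*k) (⟨u, H0_mem_u u v h1 hne⟩ : ↥(H0 u v h1 hne).verts)
    ⟨v, H0_mem_v u v h1 hne⟩
  · exact fun h => hne (congrArg Subtype.val h)
  · -- cardinality
    have huS : u ∉ {x : Vt r k | x.1 ≠ u.1} := by simp
    have hvS : v ∉ {x : Vt r k | x.1 ≠ u.1} := by simp [h1]
    have hsplit : ({u, v} ∪ {x : Vt r k | x.1 ≠ u.1} : Set (Vt r k))
        = insert u (insert v {x : Vt r k | x.1 ≠ u.1}) := by
      rw [Set.insert_union, Set.singleton_union]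
    show Nat.card ↥({u, v} ∪ {x : Vt r k | x.1 ≠ u.1} : Set (Vt r k)) = (r-1)*k + 2
    rw [Nat.card_coe_set_eq, hsplit, Set.ncard_insert_of_notMem (by
        simp only [Set.mem_insert_iff]; push_neg; exact ⟨hne, huS⟩),
      Set.ncard_insert_of_notMem hvS]
    have hS : ({x : Vt r k | x.1 ≠ u.1}).ncard = (r-1)*k := by
      rw [← Nat.card_coe_set_eq]
      exact card_ne u.1
    omega
  · intro x y
    rw [SimpleGraph.Subgraph.coe_adj]
    show (_ ∧ _ ∧ _ ∧ _) ↔ _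
    constructor
    · rintro ⟨hxy, -, -, hc⟩
      refine ⟨fun h => hxy (congrArg Subtype.val h), ?_⟩
      rcases hc with h | h | h | h
      · exact Or.inl (Subtype.ext h)
      · exact Or.inr (Or.inl (Subtype.ext h))
      · exact Or.inr (Or.inr (Or.inl (Subtype.ext h)))
      · exact Or.inr (Or.inr (Or.inr (Subtype.ext h)))
    · rintro ⟨hxy, hc⟩
      refine ⟨fun h => hxy (Subtype.ext h), x.prop, y.prop, ?_⟩
      rcases hc with h | h | h | h
      · exact Or.inl (congrArg Subtype.val h)
      · exact Or.inr (Or.inl (congrArg Subtype.val h))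
      · exact Or.inr (Or.inr (Or.inl (congrArg Subtype.val h)))
      · exact Or.inr (Or.inr (Or.inr (congrArg Subtype.val h)))

lemma no_spine_page {r k : ℕ} (hr : 2 ≤ r) (hk2 : 2 ≤ k) {u v : Vt r k}
    (h1 : u.1 = v.1) (hne : u ≠ v) {GE' : SimpleGraph (Vt r k)}
    (hGE : ∀ x y, GE'.Adj x y ↔ x.1 ≠ y.1 ∨ (x = u ∧ y = v) ∨ (x = v ∧ y = u))
    {H : GE'.Subgraph} {p : ℕ} (hp : p = (r-1)*k) (e : H.coe ≃g book p)
    (hu : u ∈ H.verts) (hv : v ∈ H.verts)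
    (hA : (e ⟨u, hu⟩).val < 2) (hB : ¬ (e ⟨v, hv⟩).val < 2) : False := by
  classical
  set α : Fin (p+2) := e ⟨u, hu⟩ with hα
  set β : Fin (p+2) := e ⟨v, hv⟩ with hβ
  set γ : Fin (p+2) := ⟨1 - α.val, by omega⟩ with hγ
  have hγval : γ.val = 1 - α.val := rfl
  have hγα : γ.val ≠ α.val := by omega
  have adj_of : ∀ (i j : Fin (p+2)), (book p).Adj i j →
      H.Adj (e.symm i).val (e.symm j).val := fun i j hij =>
    (SimpleGraph.Subgraph.coe_adj _ _ _).mp (e.symm.map_rel_iff.mpr hij)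
  have heu : e.symm α = ⟨u, hu⟩ := e.symm_apply_apply _
  set w : ↥H.verts := e.symm γ with hw
  have hwu : w.val ≠ u := by
    intro h
    have h' : w = ⟨u, hu⟩ := Subtype.ext h
    have : γ = α := by
      have := congrArg e h'
      rwa [hw, e.apply_symm_apply] at this
    exact hγα (congrArg Fin.val this)
  have hwv : w.val ≠ v := by
    intro h
    have h' : w = ⟨v, hv⟩ := Subtype.ext h
    have : γ = β := by
      have := congrArg e h'
      rwa [hw, e.apply_symm_apply] at this
    have := congrArg Fin.val this
    rw [hγval] at this
    omega
  have hadj_uw : H.Adj u w.val := by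
    have := adj_of α γ (book_adj' _ _ (Ne.symm hγα) (Or.inl hA))
    rwa [heu] at this
  have huw1 : u.1 ≠ w.val.1 := by
    have := H.adj_sub hadj_uw
    rw [hGE] at this
    rcases this with h | ⟨-, h⟩ | ⟨h, -⟩
    · exact h
    · exact absurd h hwv
    · exact absurd h hne
  -- pages inject into {x | (x.1 ≠ u.1 ∧ x.1 ≠ w.val.1)} ∪ {v}
  let pg : Fin p → Vt r k := fun j => (e.symm ⟨j.val + 2, by omega⟩).val
  have hpgu : ∀ j : Fin p, H.Adj (pg j) u := by
    intro j
    have := adj_of ⟨j.val + 2, by omega⟩ α (book_adj' _ _ (by simp; omega) (Or.inr hA))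
    rwa [heu] at this
  have hpgw : ∀ j : Fin p, H.Adj (pg j) w.val := by
    intro j
    exact adj_of ⟨j.val + 2, by omega⟩ γ (book_adj' _ _ (by rw [hγval]; simp; omega)
      (Or.inr (by omega)))
  have hpg1 : ∀ j : Fin p, (pg j).1 ≠ u.1 ∨ pg j = v := by
    intro j
    have := H.adj_sub (hpgu j)
    rw [hGE] at this
    rcases this with h | ⟨-, h⟩ | ⟨h, -⟩
    · exact Or.inl h
    · exact absurd h hne
    · exact Or.inr h
  have hpgw1 : ∀ j : Fin p, (pg j).1 ≠ w.val.1 := by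
    intro j
    have := H.adj_sub (hpgw j)
    rw [hGE] at this
    rcases this with h | ⟨-, h⟩ | ⟨-, h⟩
    · exact h
    · exact absurd h hwv
    · exact absurd h hwu
  let g : Fin p → {x : Vt r k // (x.1 ≠ u.1 ∧ x.1 ≠ w.val.1) ∨ x = v} := fun j =>
    ⟨pg j, by
      rcases hpg1 j with h | h
      · exact Or.inl ⟨h, hpgw1 j⟩
      · exact Or.inr h⟩
  have ginj : Function.Injective g := by
    intro i j hij
    have h' := congrArg Subtype.val hij
    have h2 : (e.symm ⟨i.val + 2, by omega⟩ : ↥H.verts) = e.symm ⟨j.val + 2, by omega⟩ := by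
      exact Subtype.ext h'
    have := e.symm.injective h2
    have := congrArg Fin.val this
    simp at this
    exact Fin.ext this
  have hcard_le : Nat.card {x : Vt r k // (x.1 ≠ u.1 ∧ x.1 ≠ w.val.1) ∨ x = v}
      ≤ (r-2)*k + 1 := by
    rw [Nat.card_eq_fintype_card, Fintype.card_subtype]
    have hsub : (Finset.univ.filter fun x : Vt r k => (x.1 ≠ u.1 ∧ x.1 ≠ w.val.1) ∨ x = v)
        ⊆ (Finset.univ.filter fun x : Vt r k => x.1 ≠ u.1 ∧ x.1 ≠ w.val.1) ∪ {v} := by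
      intro x hx
      simp only [Finset.mem_filter, Finset.mem_univ, true_and, Finset.mem_union,
        Finset.mem_singleton] at hx ⊢
      tauto
    calc (Finset.univ.filter fun x : Vt r k => (x.1 ≠ u.1 ∧ x.1 ≠ w.val.1) ∨ x = v).card
        ≤ ((Finset.univ.filter fun x : Vt r k => x.1 ≠ u.1 ∧ x.1 ≠ w.val.1) ∪ {v}).card :=
          Finset.card_le_card hsub
      _ ≤ (Finset.univ.filter fun x : Vt r k => x.1 ≠ u.1 ∧ x.1 ≠ w.val.1).card + 1 := by
          have := Finset.card_union_le
            (Finset.univ.filter fun x : Vt r k => x.1 ≠ u.1 ∧ x.1 ≠ w.val.1)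
            ({v} : Finset (Vt r k))
          simpa using this
      _ = (r-2)*k + 1 := by
          congr 1
          rw [← Fintype.card_subtype, ← Nat.card_eq_fintype_card]
          exact card_ne₂ u.1 w.val.1 huw1
  have hple : p ≤ (r-2)*k + 1 := by
    have h1' := Nat.card_le_card_of_injective g ginj
    rw [Nat.card_eq_fintype_card, Fintype.card_fin] at h1'
    exact h1'.trans hcard_le
  obtain ⟨s, rfl⟩ : ∃ s, r = s + 2 := ⟨r - 2, by omega⟩
  have e1 : s + 2 - 1 = s + 1 := by omega
  have e2 : s + 2 - 2 = s := by omega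
  rw [hp, e1] at hple
  rw [e2, Nat.succ_mul] at hple
  have := Nat.le_of_add_le_add_left hple
  omega

lemma arith1 {r k : ℕ} (hr : 2 ≤ r) (hk : 1 ≤ k) : (r-2)*k + 1 ≤ (r-1)*k := by
  obtain ⟨s, rfl⟩ : ∃ s, r = s + 2 := ⟨r - 2, by omega⟩
  have e1 : s + 2 - 1 = s + 1 := by omega
  have e2 : s + 2 - 2 = s := by omega
  rw [e1, e2, Nat.succ_mul]
  exact Nat.add_le_add_left hk _

lemma unique_copy {r k : ℕ} (hr : 2 ≤ r) (hk2 : 2 ≤ k) {u v : Vt r k}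
    (h1 : u.1 = v.1) (hne : u ≠ v) {p : ℕ} (hp : p = (r-1)*k)
    (H : (GE u v).Subgraph) (hcopy : Nonempty (H.coe ≃g book p)) :
    H = H0 u v h1 hne := by
  classical
  obtain ⟨e⟩ := hcopy
  have hk : 1 ≤ k := by omega
  have hGE : ∀ x y, (GE u v).Adj x y ↔ x.1 ≠ y.1 ∨ (x = u ∧ y = v) ∨ (x = v ∧ y = u) :=
    geAdj hne
  -- Step 1 : H.Adj u v
  have hHuv : H.Adj u v := by
    by_contra hnot
    let K : (Gm r k).Subgraph :=
      { verts := H.verts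
        Adj := H.Adj
        adj_sub := by
          intro x y h
          have := H.adj_sub h
          rw [hGE] at this
          rcases this with hxy | ⟨rfl, rfl⟩ | ⟨rfl, rfl⟩
          · simpa using hxy
          · exact absurd h hnot
          · exact absurd h.symm hnot
        edge_vert := fun h => H.edge_vert h
        symm := ⟨fun x y h => h.symm⟩ }
    exact free p (hp ▸ arith1 hr hk) K ⟨e⟩
  have hu : u ∈ H.verts := H.edge_vert hHuv
  have hv : v ∈ H.verts := H.edge_vert hHuv.symm
  have adj_of : ∀ (i j : Fin (p+2)), (book p).Adj i j →
      H.Adj (e.symm i).val (e.symm j).val := fun i j hij =>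
    (SimpleGraph.Subgraph.coe_adj _ _ _).mp (e.symm.map_rel_iff.mpr hij)
  have adj_to : ∀ (x y : Vt r k) (hx : x ∈ H.verts) (hy : y ∈ H.verts), H.Adj x y →
      (book p).Adj (e ⟨x, hx⟩) (e ⟨y, hy⟩) := fun x y hx hy h =>
    e.map_rel_iff.mpr ((SimpleGraph.Subgraph.coe_adj _ _ _).mpr h)
  have heu : e.symm (e ⟨u, hu⟩) = ⟨u, hu⟩ := e.symm_apply_apply _
  have hev : e.symm (e ⟨v, hv⟩) = ⟨v, hv⟩ := e.symm_apply_apply _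
  -- Step 2 : both spine values < 2
  have hαβ : (e ⟨u, hu⟩) ≠ (e ⟨v, hv⟩) := by
    intro h
    exact hne (congrArg Subtype.val (e.injective h))
  have hspine : (e ⟨u, hu⟩).val < 2 ∧ (e ⟨v, hv⟩).val < 2 := by
    have h := adj_to u v hu hv hHuv
    rw [book_adj] at h
    rcases h.2 with hA | hB
    · refine ⟨hA, ?_⟩
      by_contra hB
      exact no_spine_page hr hk2 h1 hne hGE hp e hu hv hA hB
    · refine ⟨?_, hB⟩
      by_contra hA
      have hGE' : ∀ x y, (GE u v).Adj x y ↔ x.1 ≠ y.1 ∨ (x = v ∧ y = u) ∨ (x = u ∧ y = v) := by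
        intro x y; rw [hGE]; tauto
      exact no_spine_page hr hk2 h1.symm hne.symm hGE' hp e hv hu hB hA
  obtain ⟨hα2, hβ2⟩ := hspine
  -- value characterization
  have hval : ∀ (x : Vt r k) (hx : x ∈ H.verts),
      ((e ⟨x, hx⟩).val < 2 ↔ (x = u ∨ x = v)) := by
    intro x hx
    constructor
    · intro h
      by_cases hA : e ⟨x, hx⟩ = e ⟨u, hu⟩
      · exact Or.inl (congrArg Subtype.val (e.injective hA))
      · by_cases hB : e ⟨x, hx⟩ = e ⟨v, hv⟩
        · exact Or.inr (congrArg Subtype.val (e.injective hB))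
        · exfalso
          have h1' : (e ⟨x, hx⟩).val ≠ (e ⟨u, hu⟩).val := fun hh => hA (Fin.ext hh)
          have h2' : (e ⟨x, hx⟩).val ≠ (e ⟨v, hv⟩).val := fun hh => hB (Fin.ext hh)
          have h3' : (e ⟨u, hu⟩).val ≠ (e ⟨v, hv⟩).val := fun hh => hαβ (Fin.ext hh)
          omega
    · rintro (rfl | rfl)
      · exact hα2
      · exact hβ2
  -- pages
  let pg : Fin p → Vt r k := fun j => (e.symm ⟨j.val + 2, by omega⟩).val
  have hpg_mem : ∀ j, pg j ∈ H.verts := fun j => (e.symm ⟨j.val + 2, by omega⟩).prop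
  have hpgadj : ∀ j : Fin p, H.Adj (pg j) u ∧ H.Adj (pg j) v := by
    intro j
    constructor
    · have := adj_of ⟨j.val + 2, by omega⟩ (e ⟨u, hu⟩)
        (book_adj' _ _ (by simp; omega) (Or.inr hα2))
      rwa [heu] at this
    · have := adj_of ⟨j.val + 2, by omega⟩ (e ⟨v, hv⟩)
        (book_adj' _ _ (by simp; omega) (Or.inr hβ2))
      rwa [hev] at this
  have hpgne : ∀ j : Fin p, pg j ≠ u ∧ pg j ≠ v := by
    intro j
    have hlt : ¬ ((e ⟨pg j, hpg_mem j⟩).val < 2) := by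
      have : (⟨pg j, hpg_mem j⟩ : ↥H.verts) = e.symm ⟨j.val + 2, by omega⟩ := Subtype.ext rfl
      rw [this, e.apply_symm_apply]
      simp
    constructor
    · intro h; exact hlt ((hval (pg j) (hpg_mem j)).mpr (Or.inl h))
    · intro h; exact hlt ((hval (pg j) (hpg_mem j)).mpr (Or.inr h))
  have hpgS : ∀ j : Fin p, (pg j).1 ≠ u.1 := by
    intro j
    have := H.adj_sub (hpgadj j).1
    rw [hGE] at this
    rcases this with h | ⟨-, h⟩ | ⟨h, -⟩
    · exact h
    · exact absurd h hne
    · exact absurd h (hpgne j).2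
  have hpg_inj : Function.Injective pg := by
    intro i j hij
    have h2 : (e.symm ⟨i.val + 2, by omega⟩ : ↥H.verts) = e.symm ⟨j.val + 2, by omega⟩ := by
      exact Subtype.ext hij
    have := e.symm.injective h2
    have := congrArg Fin.val this
    simp at this
    exact Fin.ext this
  -- pages are exactly S
  have hpage_of : ∀ x : Vt r k, x.1 ≠ u.1 → ∃ j, pg j = x := by
    intro x hx
    let PF : Finset (Vt r k) := Finset.image pg Finset.univ
    let SF : Finset (Vt r k) := Finset.univ.filter (fun x => x.1 ≠ u.1)
    have hPF_card : PF.card = p := by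
      rw [Finset.card_image_of_injective _ hpg_inj, Finset.card_univ, Fintype.card_fin]
    have hSF_card : SF.card = p := by
      rw [← Fintype.card_subtype, ← Nat.card_eq_fintype_card, card_ne u.1, hp]
    have hsub : PF ⊆ SF := by
      intro y hy
      simp only [PF, Finset.mem_image, Finset.mem_univ, true_and] at hy
      obtain ⟨j, rfl⟩ := hy
      simp only [SF, Finset.mem_filter, Finset.mem_univ, true_and]
      exact hpgS j
    have hEq : PF = SF := Finset.eq_of_subset_of_card_le hsub (by omega)
    have : x ∈ SF := by
      simp only [SF, Finset.mem_filter, Finset.mem_univ, true_and]; exact hx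
    rw [← hEq] at this
    simp only [PF, Finset.mem_image, Finset.mem_univ, true_and] at this
    exact this
  -- vertex sets agree
  have hverts : H.verts = (H0 u v h1 hne).verts := by
    ext x
    show x ∈ H.verts ↔ x ∈ ({u, v} ∪ {x : Vt r k | x.1 ≠ u.1} : Set (Vt r k))
    simp only [Set.mem_union, Set.mem_insert_iff, Set.mem_singleton_iff, Set.mem_setOf_eq]
    constructor
    · intro hx
      by_cases hlt : (e ⟨x, hx⟩).val < 2
      · exact Or.inl ((hval x hx).mp hlt)
      · right
        have hxv : x ≠ v := fun h => hlt ((hval x hx).mpr (Or.inr h))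
        have hxu : x ≠ u := fun h => hlt ((hval x hx).mpr (Or.inl h))
        have hadj : H.Adj x u := by
          have := adj_of (e ⟨x, hx⟩) (e ⟨u, hu⟩)
            (book_adj' _ _ (fun hh => hlt (by omega)) (Or.inr hα2))
          rwa [heu, e.symm_apply_apply] at this
        have := H.adj_sub hadj
        rw [hGE] at this
        rcases this with h | ⟨-, h⟩ | ⟨h, -⟩
        · exact h
        · exact absurd h hne
        · exact absurd h hxv
    · rintro ((rfl | rfl) | hx)
      · exact hu
      · exact hv
      · obtain ⟨j, rfl⟩ := hpage_of x hx
        exact hpg_mem j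
  -- adjacency agrees
  apply SimpleGraph.Subgraph.ext hverts
  funext x y
  apply propext
  constructor
  · intro h
    have hx : x ∈ H.verts := H.edge_vert h
    have hy : y ∈ H.verts := H.edge_vert h.symm
    have hbook := adj_to x y hx hy h
    rw [book_adj] at hbook
    have hxy : x ≠ y := (H.adj_sub h).ne
    refine ⟨hxy, ?_, ?_, ?_⟩
    · have : x ∈ (H0 u v h1 hne).verts := hverts ▸ hx
      exact this
    · have : y ∈ (H0 u v h1 hne).verts := hverts ▸ hy
      exact this
    rcases hbook.2 with hh | hh
    · rcases (hval x hx).mp hh with h' | h'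
      · exact Or.inl h'
      · exact Or.inr (Or.inl h')
    · rcases (hval y hy).mp hh with h' | h'
      · exact Or.inr (Or.inr (Or.inl h'))
      · exact Or.inr (Or.inr (Or.inr h'))
  · rintro ⟨hxy, hx0, hy0, hc⟩
    have haux : ∀ z : Vt r k, z.1 ≠ u.1 → H.Adj u z ∧ H.Adj v z := by
      intro z hz
      obtain ⟨j, rfl⟩ := hpage_of z hz
      exact ⟨(hpgadj j).1.symm, (hpgadj j).2.symm⟩
    have hx0' : x = u ∨ x = v ∨ x.1 ≠ u.1 := by
      simpa [Set.mem_union, Set.mem_insert_iff, Set.mem_singleton_iff, Set.mem_setOf_eq,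
        or_assoc] using hx0
    have hy0' : y = u ∨ y = v ∨ y.1 ≠ u.1 := by
      simpa [Set.mem_union, Set.mem_insert_iff, Set.mem_singleton_iff, Set.mem_setOf_eq,
        or_assoc] using hy0
    rcases hx0' with rfl | rfl | hxS
    · rcases hy0' with rfl | rfl | hyS
      · exact absurd rfl hxy
      · exact hHuv
      · exact (haux y hyS).1
    · rcases hy0' with rfl | rfl | hyS
      · exact hHuv.symm
      · exact absurd rfl hxy
      · exact (haux y hyS).2
    · rcases hy0' with rfl | rfl | hyS
      · exact ((haux x hxS).1).symm
      · exact ((haux x hxS).2).symm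
      · exfalso
        rcases hc with rfl | rfl | rfl | rfl
        · exact hxS rfl
        · exact hxS h1.symm
        · exact hyS rfl
        · exact hyS h1.symm

theorem stmt19 (r k : ℕ) (hr : 2 ≤ r) (hk : 1 ≤ k) :
    UniquelySaturated (book ((r - 1) * k))
        (completeMultipartiteGraph fun _ : Fin r => Fin k) ∧
      ∀ G' : (completeMultipartiteGraph fun _ : Fin r => Fin k).Subgraph,
        ¬ IsCopy (book ((r - 2) * k + 1)) G' := by
  have hfree2 : ∀ G' : (completeMultipartiteGraph fun _ : Fin r => Fin k).Subgraph,
      ¬ IsCopy (book ((r - 2) * k + 1)) G' := fun G' => free _ le_rfl G'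
  refine ⟨⟨fun G' => free _ (arith1 hr hk) G', ?_⟩, hfree2⟩
  intro u v hne hnadj
  have h1 : u.1 = v.1 := by
    by_contra h
    exact hnadj h
  have h2 : u.2 ≠ v.2 := fun h => hne (Sigma.ext h1 (heq_of_eq h))
  have hk2 : 2 ≤ k := by
    have hnt : Nontrivial (Fin k) := ⟨⟨u.2, v.2, h2⟩⟩
    have := Fintype.one_lt_card_iff_nontrivial (α := Fin k) |>.mpr hnt
    simp at this; omega
  refine ⟨H0 u v h1 hne, H0_copy u v h1 hne, ?_⟩
  intro H hH
  exact unique_copy hr hk2 h1 hne rfl H hH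
end
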